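/- Let R₊ ⊂ ℝ⁴ be the set of positive roots of type F₄: R₊ = {e_i : 1 ≤ i ≤ 4} ∪ {e_i − e_j : 1 ≤ i < j ≤ 4} ∪ {e_i + e_j : 1 ≤ i < j ≤ 4} ∪ {(e₁ ± e₂ ± e₃ ± e₄)/2 (all eight sign choices)}. Then for every nonzero H ∈ ℝ⁴ that is not proportional to any element of R₊, the set S_H = {v_H(α) : α ∈ R₊, ⟪α,H⟫ ≠ 0}, where v_H(α) = α/⟪α,H⟫ − H/‖H‖², is NOT invariant under negation: S_H ≠ −S_H. -/

import Mathlib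

open scoped RealInnerProductSpace

private abbrev IsRp (x : EuclideanSpace ℝ (Fin 4)) : Prop :=
  (∃ i : Fin 4, x = EuclideanSpace.single i (1 : ℝ)) ∨
      (∃ i j : Fin 4, i < j ∧
        (x = EuclideanSpace.single i (1 : ℝ) - EuclideanSpace.single j 1 ∨
         x = EuclideanSpace.single i (1 : ℝ) + EuclideanSpace.single j 1)) ∨
      (∃ ε : Fin 4 → ℝ, (∀ i, ε i = 1 ∨ ε i = -1) ∧ ε 0 = 1 ∧
        x = (1 / 2 : ℝ) • ∑ i : Fin 4, ε i • EuclideanSpace.single i (1 : ℝ))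

private lemma half_apply (ε : Fin 4 → ℝ) (j : Fin 4) :
    ((1 / 2 : ℝ) • ∑ i : Fin 4, ε i • EuclideanSpace.single i (1 : ℝ)) j = ε j / 2 := by
  simp [PiLp.smul_apply, Finset.sum_apply, EuclideanSpace.single_apply, Fin.sum_univ_four]
  fin_cases j <;> simp <;> ring

private lemma half_inner (ε : Fin 4 → ℝ) (H : EuclideanSpace ℝ (Fin 4)) :
    ⟪((1 / 2 : ℝ) • ∑ i : Fin 4, ε i • EuclideanSpace.single i (1 : ℝ)), H⟫ =
      (ε 0 * H 0 + ε 1 * H 1 + ε 2 * H 2 + ε 3 * H 3) / 2 := by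
  simp [real_inner_smul_left, sum_inner, inner_add_left, EuclideanSpace.inner_single_left, Fin.sum_univ_four]
  ring

private lemma rpSubNe {m n t : Fin 4} (hmn : m ≠ n)
    (h : (EuclideanSpace.single m (1:ℝ) - EuclideanSpace.single n 1 :
      EuclideanSpace ℝ (Fin 4)) t ≠ 0) : t = m ∨ t = n := by
  by_contra hc
  push_neg at hc
  simp [EuclideanSpace.single_apply, hc.1, hc.2] at h

private lemma rpAddNe {m n t : Fin 4} (hmn : m ≠ n)
    (h : (EuclideanSpace.single m (1:ℝ) + EuclideanSpace.single n 1 :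
      EuclideanSpace ℝ (Fin 4)) t ≠ 0) : t = m ∨ t = n := by
  by_contra hc
  push_neg at hc
  simp [EuclideanSpace.single_apply, hc.1, hc.2] at h

private lemma rpSubSq {m n t : Fin 4} (hmn : m ≠ n)
    (h : (EuclideanSpace.single m (1:ℝ) - EuclideanSpace.single n 1 :
      EuclideanSpace ℝ (Fin 4)) t ≠ 0) :
    ((EuclideanSpace.single m (1:ℝ) - EuclideanSpace.single n 1 :
      EuclideanSpace ℝ (Fin 4)) t)^2 = 1 := by
  rcases rpSubNe hmn h with rfl | rfl <;>
    · simp [EuclideanSpace.single_apply]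
      tauto

private lemma rpAddSq {m n t : Fin 4} (hmn : m ≠ n)
    (h : (EuclideanSpace.single m (1:ℝ) + EuclideanSpace.single n 1 :
      EuclideanSpace ℝ (Fin 4)) t ≠ 0) :
    ((EuclideanSpace.single m (1:ℝ) + EuclideanSpace.single n 1 :
      EuclideanSpace ℝ (Fin 4)) t)^2 = 1 := by
  rcases rpAddNe hmn h with rfl | rfl <;>
    · simp [EuclideanSpace.single_apply]
      tauto

private lemma isRp_sq {x : EuclideanSpace ℝ (Fin 4)} (hx : IsRp x) (i j : Fin 4)
    (hi : x i ≠ 0) (hj : x j ≠ 0) : (x i)^2 = (x j)^2 := by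
  rcases hx with ⟨m, rfl⟩ | ⟨m, n, hmn, (rfl | rfl)⟩ | ⟨ε, hε, hε0, rfl⟩
  · have h1 : i = m := by by_contra h; simp [EuclideanSpace.single_apply, h] at hi
    have h2 : j = m := by by_contra h; simp [EuclideanSpace.single_apply, h] at hj
    rw [h1, h2]
  · rw [rpSubSq (ne_of_lt hmn) hi, rpSubSq (ne_of_lt hmn) hj]
  · rw [rpAddSq (ne_of_lt hmn) hi, rpAddSq (ne_of_lt hmn) hj]
  · rw [half_apply, half_apply]
    rcases hε i with h | h <;> rcases hε j with h' | h' <;> rw [h, h'] <;> ring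

private lemma isRp_three {x : EuclideanSpace ℝ (Fin 4)} (hx : IsRp x) {i j k : Fin 4} (l : Fin 4)
    (hij : i ≠ j) (hik : i ≠ k) (hjk : j ≠ k)
    (hi : x i ≠ 0) (hj : x j ≠ 0) (hk : x k ≠ 0) : x l ≠ 0 := by
  rcases hx with ⟨m, rfl⟩ | ⟨m, n, hmn, (rfl | rfl)⟩ | ⟨ε, hε, hε0, rfl⟩
  · have h1 : i = m := by by_contra h; simp [EuclideanSpace.single_apply, h] at hi
    have h2 : j = m := by by_contra h; simp [EuclideanSpace.single_apply, h] at hj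
    exact absurd (h1.trans h2.symm) hij
  · rcases rpSubNe (ne_of_lt hmn) hi with rfl | rfl <;>
      rcases rpSubNe (ne_of_lt hmn) hj with rfl | rfl <;>
      rcases rpSubNe (ne_of_lt hmn) hk with rfl | rfl <;> simp_all
  · rcases rpAddNe (ne_of_lt hmn) hi with rfl | rfl <;>
      rcases rpAddNe (ne_of_lt hmn) hj with rfl | rfl <;>
      rcases rpAddNe (ne_of_lt hmn) hk with rfl | rfl <;> simp_all
  · rw [half_apply]
    rcases hε l with h | h <;> rw [h] <;> norm_num

set_option maxHeartbeats 1000000 in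
/-- For the root system of type `F₄`, no orbit other than those through
restricted root vectors is austere: for every nonzero `H ∈ ℝ⁴` not proportional
to any positive root, the set `S_H = {α/⟪α,H⟫ - H/‖H‖²}` is not invariant under
negation. -/
theorem stmt_15
    (Rp : Set (EuclideanSpace ℝ (Fin 4)))
    (hRp : Rp = {x | (∃ i : Fin 4, x = EuclideanSpace.single i (1 : ℝ)) ∨
      (∃ i j : Fin 4, i < j ∧
        (x = EuclideanSpace.single i (1 : ℝ) - EuclideanSpace.single j 1 ∨
         x = EuclideanSpace.single i (1 : ℝ) + EuclideanSpace.single j 1)) ∨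
      (∃ ε : Fin 4 → ℝ, (∀ i, ε i = 1 ∨ ε i = -1) ∧ ε 0 = 1 ∧
        x = (1 / 2 : ℝ) • ∑ i : Fin 4, ε i • EuclideanSpace.single i (1 : ℝ))})
    (H : EuclideanSpace ℝ (Fin 4)) (hH : H ≠ 0)
    (hprop : ∀ α ∈ Rp, ∀ c : ℝ, H ≠ c • α)
    (S : Set (EuclideanSpace ℝ (Fin 4)))
    (hS : S = {y | ∃ α ∈ Rp, ⟪α, H⟫ ≠ 0 ∧ y = (⟪α, H⟫)⁻¹ • α - (‖H‖ ^ 2)⁻¹ • H}) :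
    (fun y => -y) '' S ≠ S := by
  subst hRp
  intro heq
  obtain ⟨k, hkdef⟩ : ∃ k : ℝ, k = ‖H‖ ^ 2 := ⟨_, rfl⟩
  have hk : k ≠ 0 := by rw [hkdef]; exact pow_ne_zero 2 (norm_ne_zero_iff.2 hH)
  have hkpos : 0 < k := by
    rw [hkdef]; exact pow_pos (norm_pos_iff.2 hH) 2
  have hK4 : k = H 0 ^ 2 + H 1 ^ 2 + H 2 ^ 2 + H 3 ^ 2 := by
    rw [hkdef, EuclideanSpace.norm_sq_eq]
    simp [PiLp.inner_apply, Fin.sum_univ_four]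
  -- the key consequence of `S = -S`
  have key : ∀ α : EuclideanSpace ℝ (Fin 4), IsRp α → ⟪α, H⟫ ≠ 0 →
      ∃ β, IsRp β ∧ ⟪β, H⟫ ≠ 0 ∧
        ∀ i, β i = ⟪β, H⟫ * (2 * H i / k - α i / ⟪α, H⟫) := by
    intro α hα hA
    have hy : ((⟪α, H⟫)⁻¹ • α - (‖H‖ ^ 2)⁻¹ • H) ∈ S := by
      rw [hS]; exact ⟨α, hα, hA, rfl⟩
    have hny : -((⟪α, H⟫)⁻¹ • α - (‖H‖ ^ 2)⁻¹ • H) ∈ S := by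
      rw [← heq]; exact ⟨_, hy, rfl⟩
    rw [hS] at hny
    obtain ⟨β, hβ, hB, hEq⟩ := hny
    refine ⟨β, hβ, hB, fun i => ?_⟩
    have h' := congrArg (fun v : EuclideanSpace ℝ (Fin 4) => v i) hEq
    rw [← hkdef] at h'
    set A := (⟪α, H⟫ : ℝ) with hAdef
    set B := (⟪β, H⟫ : ℝ) with hBdef
    simp only [PiLp.neg_apply, PiLp.sub_apply, PiLp.smul_apply, smul_eq_mul] at h'
    field_simp at h'
    have key2 : β i * (k * A) = B * (2 * H i * A - k * α i) :=
      mul_right_cancel₀ hk (by linear_combination -k * h' :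
        (β i * (k * A)) * k = (B * (2 * H i * A - k * α i)) * k)
    rw [div_sub_div _ _ hk hA, ← mul_div_assoc, eq_div_iff (mul_ne_zero hk hA)]
    exact key2
  have memSingle : ∀ q : Fin 4, IsRp (EuclideanSpace.single q (1:ℝ)) :=
    fun q => Or.inl ⟨q, rfl⟩
  have innerSingle : ∀ q : Fin 4, ⟪EuclideanSpace.single q (1:ℝ), H⟫ = H q := by
    intro q; simp [EuclideanSpace.inner_single_left]
  -- key applied to a coordinate root e_q
  have keyE : ∀ q : Fin 4, H q ≠ 0 →
      ∃ β, IsRp β ∧ ⟪β, H⟫ ≠ 0 ∧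
        ∀ i, β i = ⟪β, H⟫ * (2 * H i / k - (if i = q then 1 else 0) / H q) := by
    intro q hq
    obtain ⟨β, hβ, hB, hco⟩ := key _ (memSingle q) (by rw [innerSingle]; exact hq)
    refine ⟨β, hβ, hB, fun i => ?_⟩
    rw [hco i, innerSingle]
    simp [EuclideanSpace.single_apply]
  -- n=4 building block: equal squares
  have caseSq : ∀ q r s : Fin 4, q ≠ r → q ≠ s → H q ≠ 0 → H r ≠ 0 → H s ≠ 0 →
      H r ^ 2 = H s ^ 2 := by
    intro q r s hqr hqs hq hr hs
    obtain ⟨β, hβ, hB, hco⟩ := keyE q hq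
    have er : β r = ⟪β, H⟫ * (2 * H r / k) := by
      rw [hco r]; simp [Ne.symm hqr]
    have es : β s = ⟪β, H⟫ * (2 * H s / k) := by
      rw [hco s]; simp [Ne.symm hqs]
    have hβr : β r ≠ 0 := by
      rw [er]; exact mul_ne_zero hB (div_ne_zero (mul_ne_zero two_ne_zero hr) hk)
    have hβs : β s ≠ 0 := by
      rw [es]; exact mul_ne_zero hB (div_ne_zero (mul_ne_zero two_ne_zero hs) hk)
    have hsq := isRp_sq hβ r s hβr hβs
    rw [er, es] at hsq
    have h1 : (2 * H r / k) ^ 2 = (2 * H s / k) ^ 2 := by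
      rw [mul_pow, mul_pow] at hsq
      exact mul_left_cancel₀ (pow_ne_zero 2 hB) hsq
    have h2 : (2 * H r) ^ 2 = (2 * H s) ^ 2 := by
      rw [div_pow, div_pow, div_eq_div_iff (pow_ne_zero 2 hk) (pow_ne_zero 2 hk)] at h1
      exact mul_right_cancel₀ (pow_ne_zero 2 hk) h1
    nlinarith [h2]
  -- n=3 building block
  have caseK : ∀ q r s j : Fin 4, q ≠ r → q ≠ s → r ≠ s → q ≠ j → r ≠ j → s ≠ j →
      H q ≠ 0 → H r ≠ 0 → H s ≠ 0 → H j = 0 → 2 * H q ^ 2 = k := by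
    intro q r s j hqr hqs hrs hqj hrj hsj hq hr hs hj
    obtain ⟨β, hβ, hB, hco⟩ := keyE q hq
    have er : β r = ⟪β, H⟫ * (2 * H r / k) := by rw [hco r]; simp [Ne.symm hqr]
    have es : β s = ⟪β, H⟫ * (2 * H s / k) := by rw [hco s]; simp [Ne.symm hqs]
    have ej : β j = 0 := by rw [hco j]; simp [Ne.symm hqj, hj]
    have hβr : β r ≠ 0 := by
      rw [er]; exact mul_ne_zero hB (div_ne_zero (mul_ne_zero two_ne_zero hr) hk)
    have hβs : β s ≠ 0 := by
      rw [es]; exact mul_ne_zero hB (div_ne_zero (mul_ne_zero two_ne_zero hs) hk)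
    by_cases hq0 : β q = 0
    · have h1 := hco q
      rw [hq0, if_pos rfl] at h1
      have h2 : 2 * H q / k - 1 / H q = 0 := by
        rcases mul_eq_zero.mp h1.symm with h | h
        · exact absurd h hB
        · exact h
      have h3 : 2 * H q / k = 1 / H q := by linarith
      field_simp at h3
      linarith
    · exact absurd (isRp_three hβ j hqr hqs hrs hq0 hβr hβs) (by rw [ej]; simp)
  -- n=2 case
  have caseN2 : ∀ q r j l : Fin 4, q < r → q ≠ j → q ≠ l → r ≠ j → r ≠ l → j ≠ l →
      H q ≠ 0 → H r ≠ 0 → H j = 0 → H l = 0 →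
      (∀ i, i ≠ q → i ≠ r → H i = 0) →
      (H 0 + H 1 + H 2 + H 3 = H q + H r) → False := by
    intro q r j l hqr hqj hql hrj hrl hjl hq hr hj hl hz hsum
    have hqr' : q ≠ r := ne_of_lt hqr
    by_cases hpm : H r = H q
    · refine hprop _ (Or.inr (Or.inl ⟨q, r, hqr, Or.inr rfl⟩)) (H q) ?_
      ext i
      by_cases hiq : i = q
      · subst hiq; simp [EuclideanSpace.single_apply, hqr']
      · by_cases hir : i = r
        · subst hir; simp [EuclideanSpace.single_apply, Ne.symm hqr', hpm]
        · simp [EuclideanSpace.single_apply, hiq, hir, hz i hiq hir]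
    by_cases hpm2 : H r = -H q
    · refine hprop _ (Or.inr (Or.inl ⟨q, r, hqr, Or.inl rfl⟩)) (H q) ?_
      ext i
      by_cases hiq : i = q
      · subst hiq; simp [EuclideanSpace.single_apply, hqr']
      · by_cases hir : i = r
        · subst hir; simp [EuclideanSpace.single_apply, Ne.symm hqr', hpm2]
        · simp [EuclideanSpace.single_apply, hiq, hir, hz i hiq hir]
    have hw : H q + H r ≠ 0 := fun hcon => hpm2 (by linarith)
    have hmem : IsRp ((1 / 2 : ℝ) • ∑ i : Fin 4,
        (fun _ : Fin 4 => (1:ℝ)) i • EuclideanSpace.single i (1 : ℝ)) :=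
      Or.inr (Or.inr ⟨fun _ => (1:ℝ), fun i => Or.inl rfl, rfl, rfl⟩)
    have hIα : ⟪((1 / 2 : ℝ) • ∑ i : Fin 4,
        (fun _ : Fin 4 => (1:ℝ)) i • EuclideanSpace.single i (1 : ℝ)), H⟫ = (H q + H r) / 2 := by
      rw [half_inner]
      simp only [one_mul]
      rw [hsum]
    have hA : ⟪((1 / 2 : ℝ) • ∑ i : Fin 4,
        (fun _ : Fin 4 => (1:ℝ)) i • EuclideanSpace.single i (1 : ℝ)), H⟫ ≠ 0 := by
      rw [hIα]; exact div_ne_zero hw two_ne_zero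
    obtain ⟨β, hβ, hB, hco⟩ := key _ hmem hA
    have hhalf : (1/2 : ℝ) / ((H q + H r) / 2) = 1 / (H q + H r) := by
      rw [div_div_div_comm]
      norm_num
    have hco' : ∀ i, β i = ⟪β, H⟫ * (2 * H i / k - 1 / (H q + H r)) := by
      intro i
      rw [hco i, hIα, half_apply]
      show ⟪β, H⟫ * (2 * H i / k - (1/2) / ((H q + H r) / 2)) = _
      rw [hhalf]
    have hβj : β j ≠ 0 := by
      rw [hco' j, hj]
      refine mul_ne_zero hB ?_
      simpa using one_div_ne_zero hw
    have hβl : β l ≠ 0 := by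
      rw [hco' l, hl]
      refine mul_ne_zero hB ?_
      simpa using one_div_ne_zero hw
    by_cases h1 : β q = 0 <;> by_cases h2 : β r = 0
    · -- both vanish
      have e1 := hco' q; rw [h1] at e1
      have e2 := hco' r; rw [h2] at e2
      have f1 : 2 * H q / k - 1 / (H q + H r) = 0 := by
        rcases mul_eq_zero.mp e1.symm with h | h
        · exact absurd h hB
        · exact h
      have f2 : 2 * H r / k - 1 / (H q + H r) = 0 := by
        rcases mul_eq_zero.mp e2.symm with h | h
        · exact absurd h hB
        · exact h
      have : 2 * H q / k = 2 * H r / k := by linarith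
      field_simp at this
      exact hpm (by linarith)
    · exact (isRp_three hβ q hrj hrl hjl h2 hβj hβl) h1
    · exact (isRp_three hβ r hqj hql hjl h1 hβj hβl) h2
    · -- both nonzero
      have key3 : ∀ t : Fin 4, H t ≠ 0 → β t ≠ 0 → H t * (H q + H r) = k := by
        intro t ht hβt
        have s1 := isRp_sq hβ t j hβt hβj
        rw [hco' t, hco' j, hj] at s1
        have t1 : (2 * H t / k - 1 / (H q + H r)) ^ 2
            = (2 * 0 / k - 1 / (H q + H r)) ^ 2 := by
          rw [mul_pow, mul_pow] at s1
          exact mul_left_cancel₀ (pow_ne_zero 2 hB) s1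
        have t2 : (2 * H t / k) * (2 * H t / k - 2 * (1 / (H q + H r))) = 0 := by
          linear_combination t1
        rcases mul_eq_zero.mp t2 with h | h
        · exfalso
          rw [div_eq_zero_iff] at h
          rcases h with h | h
          · exact ht (by linarith)
          · exact hk h
        · have h' : 2 * H t / k = 2 / (H q + H r) := by
            rw [sub_eq_zero] at h
            rw [h]; ring
          rw [div_eq_div_iff hk hw] at h'
          linarith
      have u1 := key3 q hq h1
      have u2 := key3 r hr h2
      exact hpm (mul_right_cancel₀ hw (u2.trans u1.symm))
  -- remaining simple pieces
  have n1 : ∀ q : Fin 4, (∀ i, i ≠ q → H i = 0) → False := by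
    intro q hz
    refine hprop _ (Or.inl ⟨q, rfl⟩) (H q) ?_
    ext i
    by_cases hiq : i = q
    · subst hiq; simp [EuclideanSpace.single_apply]
    · simp [EuclideanSpace.single_apply, hiq, hz i hiq]
  have sq0 : ∀ i : Fin 4, H 0 ≠ 0 → H i ^ 2 = H 0 ^ 2 → H i / H 0 = 1 ∨ H i / H 0 = -1 := by
    intro i h0 hsq
    have hfac : (H i - H 0) * (H i + H 0) = 0 := by linear_combination hsq
    rcases mul_eq_zero.mp hfac with h | h
    · left; rw [show H i = H 0 by linarith]; exact div_self h0
    · right; rw [show H i = -H 0 by linarith, neg_div, div_self h0]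
  by_cases h0 : H 0 = 0 <;> by_cases h1 : H 1 = 0 <;>
    by_cases h2 : H 2 = 0 <;> by_cases h3 : H 3 = 0
  · exact hH (by ext i; fin_cases i <;> simp [h0, h1, h2, h3])
  · exact n1 3 (by intro i hi; fin_cases i <;> first | exact h0 | exact h1 | exact h2 | exact h3 | exact absurd rfl hi)
  · exact n1 2 (by intro i hi; fin_cases i <;> first | exact h0 | exact h1 | exact h2 | exact h3 | exact absurd rfl hi)
  · exact caseN2 2 3 0 1 (by decide) (by decide) (by decide) (by decide) (by decide) (by decide) h2 h3 h0 h1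
      (by intro i hi1 hi2; fin_cases i <;> first | exact h0 | exact h1 | exact h2 | exact h3 | exact absurd rfl hi1 | exact absurd rfl hi2) (by rw [h0, h1]; ring)
  · exact n1 1 (by intro i hi; fin_cases i <;> first | exact h0 | exact h1 | exact h2 | exact h3 | exact absurd rfl hi)
  · exact caseN2 1 3 0 2 (by decide) (by decide) (by decide) (by decide) (by decide) (by decide) h1 h3 h0 h2
      (by intro i hi1 hi2; fin_cases i <;> first | exact h0 | exact h1 | exact h2 | exact h3 | exact absurd rfl hi1 | exact absurd rfl hi2) (by rw [h0, h2]; ring)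
  · exact caseN2 1 2 0 3 (by decide) (by decide) (by decide) (by decide) (by decide) (by decide) h1 h2 h0 h3
      (by intro i hi1 hi2; fin_cases i <;> first | exact h0 | exact h1 | exact h2 | exact h3 | exact absurd rfl hi1 | exact absurd rfl hi2) (by rw [h0, h3]; ring)
  · have c1 := caseK 1 2 3 0 (by decide) (by decide) (by decide) (by decide) (by decide) (by decide) h1 h2 h3 h0
    have c2 := caseK 2 1 3 0 (by decide) (by decide) (by decide) (by decide) (by decide) (by decide) h2 h1 h3 h0
    have c3 := caseK 3 1 2 0 (by decide) (by decide) (by decide) (by decide) (by decide) (by decide) h3 h1 h2 h0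
    have e0 : H 0 ^ 2 = 0 := by rw [h0]; ring
    linarith
  · exact n1 0 (by intro i hi; fin_cases i <;> first | exact h0 | exact h1 | exact h2 | exact h3 | exact absurd rfl hi)
  · exact caseN2 0 3 1 2 (by decide) (by decide) (by decide) (by decide) (by decide) (by decide) h0 h3 h1 h2
      (by intro i hi1 hi2; fin_cases i <;> first | exact h0 | exact h1 | exact h2 | exact h3 | exact absurd rfl hi1 | exact absurd rfl hi2) (by rw [h1, h2]; ring)
  · exact caseN2 0 2 1 3 (by decide) (by decide) (by decide) (by decide) (by decide) (by decide) h0 h2 h1 h3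
      (by intro i hi1 hi2; fin_cases i <;> first | exact h0 | exact h1 | exact h2 | exact h3 | exact absurd rfl hi1 | exact absurd rfl hi2) (by rw [h1, h3]; ring)
  · have c1 := caseK 0 2 3 1 (by decide) (by decide) (by decide) (by decide) (by decide) (by decide) h0 h2 h3 h1
    have c2 := caseK 2 0 3 1 (by decide) (by decide) (by decide) (by decide) (by decide) (by decide) h2 h0 h3 h1
    have c3 := caseK 3 0 2 1 (by decide) (by decide) (by decide) (by decide) (by decide) (by decide) h3 h0 h2 h1
    have e1 : H 1 ^ 2 = 0 := by rw [h1]; ring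
    linarith
  · exact caseN2 0 1 2 3 (by decide) (by decide) (by decide) (by decide) (by decide) (by decide) h0 h1 h2 h3
      (by intro i hi1 hi2; fin_cases i <;> first | exact h0 | exact h1 | exact h2 | exact h3 | exact absurd rfl hi1 | exact absurd rfl hi2) (by rw [h2, h3]; ring)
  · have c1 := caseK 0 1 3 2 (by decide) (by decide) (by decide) (by decide) (by decide) (by decide) h0 h1 h3 h2
    have c2 := caseK 1 0 3 2 (by decide) (by decide) (by decide) (by decide) (by decide) (by decide) h1 h0 h3 h2
    have c3 := caseK 3 0 1 2 (by decide) (by decide) (by decide) (by decide) (by decide) (by decide) h3 h0 h1 h2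
    have e2 : H 2 ^ 2 = 0 := by rw [h2]; ring
    linarith
  · have c1 := caseK 0 1 2 3 (by decide) (by decide) (by decide) (by decide) (by decide) (by decide) h0 h1 h2 h3
    have c2 := caseK 1 0 2 3 (by decide) (by decide) (by decide) (by decide) (by decide) (by decide) h1 h0 h2 h3
    have c3 := caseK 2 0 1 3 (by decide) (by decide) (by decide) (by decide) (by decide) (by decide) h2 h0 h1 h3
    have e3 : H 3 ^ 2 = 0 := by rw [h3]; ring
    linarith
  · have s12 := caseSq 0 1 2 (by decide) (by decide) h0 h1 h2
    have s13 := caseSq 0 1 3 (by decide) (by decide) h0 h1 h3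
    have s02 := caseSq 1 0 2 (by decide) (by decide) h1 h0 h2
    refine hprop ((1 / 2 : ℝ) • ∑ i : Fin 4,
        (fun i => H i / H 0) i • EuclideanSpace.single i (1 : ℝ))
      (Or.inr (Or.inr ⟨fun i => H i / H 0, ?_, ?_, rfl⟩)) (2 * H 0) ?_
    · intro i
      fin_cases i
      · left; exact div_self h0
      · exact sq0 1 h0 (by linarith)
      · exact sq0 2 h0 (by linarith)
      · exact sq0 3 h0 (by linarith)
    · exact div_self h0
    · ext i
      rw [PiLp.smul_apply, half_apply, smul_eq_mul]
      show H i = 2 * H 0 * (H i / H 0 / 2)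
      field_simp
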